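/- arXiv:2007.14784 — 6 statements merged into one kernel-verified Lean document; each statement's English description precedes it below -/
import Mathlib

section
/- (Lax-functorial stability theorem, disjunctivity part.) In the situation described in the context, assume moreover that α_{i0} is disjunctive (S ≠ T implies S^{α_{i0}} ∩ T^{α_{i0}} = ∅). Then for any two distinct objects S ≠ T of E = D_{i0}, the sets S^β and T^β (both subsets of Π_{i∈I} st(α_i)) are disjoint: S^β ∩ T^β = ∅. -/
open CategoryTheory

/-- A family of open dynamics `A_i = (α_i →^{ρ_i} h_i)` indexed by a nonempty set `I`:
engines `D i` (small categories), parameter sets `L i`, state carriers `X i` with the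
states of type `S` being `stS i S`, transitions `tr i d lam : X i → Set (X i)`,
clocks with instant carriers `H i`, instants of type `S` being `hS i S` and transition
functions `hmap i d`, and datations `rho i`, subject to the axioms of disjunctivity,
lax identity, lax composition, functoriality of the clocks and equivariance of the
datations. -/
structure DynFamily where
  I : Type
  nonemptyI : Nonempty I
  D : I → Cat.{0, 0}
  L : I → Type
  X : I → Type
  H : I → Type
  stS : ∀ i, D i → Set (X i)
  tr : ∀ i, ∀ {S T : D i}, (S ⟶ T) → L i → X i → Set (X i)
  hS : ∀ i, D i → Set (H i)
  hmap : ∀ i, ∀ {S T : D i}, (S ⟶ T) → H i → H i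
  rho : ∀ i, X i → H i
  stDisj : ∀ i, ∀ {S T : D i}, S ≠ T → stS i S ∩ stS i T = ∅
  laxId : ∀ i (S : D i) (lam : L i), ∀ a ∈ stS i S, tr i (𝟙 S) lam a ⊆ {a}
  laxComp : ∀ i, ∀ {S T U : D i} (d : S ⟶ T) (e : T ⟶ U) (lam : L i),
    ∀ a ∈ stS i S, tr i (d ≫ e) lam a ⊆ ⋃ b ∈ tr i d lam a, tr i e lam b
  trMem : ∀ i, ∀ {S T : D i} (d : S ⟶ T) (lam : L i), ∀ a ∈ stS i S,
    tr i d lam a ⊆ stS i T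
  hDisj : ∀ i, ∀ {S T : D i}, S ≠ T → hS i S ∩ hS i T = ∅
  hMem : ∀ i, ∀ {S T : D i} (d : S ⟶ T), ∀ t ∈ hS i S, hmap i d t ∈ hS i T
  hId : ∀ i (S : D i), ∀ t ∈ hS i S, hmap i (𝟙 S) t = t
  hComp : ∀ i, ∀ {S T U : D i} (d : S ⟶ T) (e : T ⟶ U),
    ∀ t ∈ hS i S, hmap i (d ≫ e) t = hmap i e (hmap i d t)
  rhoMem : ∀ i (S : D i), ∀ a ∈ stS i S, rho i a ∈ hS i S
  rhoNat : ∀ i, ∀ {S T : D i} (d : S ⟶ T) (lam : L i),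
    ∀ a ∈ stS i S, ∀ b ∈ tr i d lam a, rho i b = hmap i d (rho i a)

/-- The anteriority preorder on the instants of the `i`-th clock:
`s ≤ t` iff some arrow `e` of `D i` sends the instant `s` to `t`. -/
def DynFamily.ante (F : DynFamily) (i : F.I) (s t : F.H i) : Prop :=
  ∃ (S T : F.D i) (e : S ⟶ T), s ∈ F.hS i S ∧ F.hmap i e s = t

/-- `σ` (a partial function on instants, encoded via `Option`) is the outgoing part of a
realization of the `i`-th dynamic with parametric part `lam`. -/
def DynFamily.IsRealization (F : DynFamily) (i : F.I) (lam : F.L i)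
    (σ : F.H i → Option (F.X i)) : Prop :=
  (∀ t a, σ t = some a → ∃ S : F.D i, t ∈ F.hS i S) ∧
  (∀ t a, σ t = some a → F.rho i a = t) ∧
  (∀ (S : F.D i), ∀ t ∈ F.hS i S, ∀ a, σ t = some a → a ∈ F.stS i S) ∧
  (∀ ⦃S T : F.D i⦄ (d : S ⟶ T), ∀ t ∈ F.hS i S, ∀ b, σ (F.hmap i d t) = some b →
    ∃ a, σ t = some a ∧ b ∈ F.tr i d lam a)

/-- `σ` passes through the state `a` : `σ ▷ a` iff `σ(ρ_i(a)) = a`. -/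
def DynFamily.Pass (F : DynFamily) (i : F.I) (σ : F.H i → Option (F.X i)) (a : F.X i) : Prop :=
  σ (F.rho i a) = some a

/-- An interaction for a family of open dynamics: an interaction request `R` (a set of
`I`-families of pairs (outgoing realization, parameter value)), a conductor `i0` and a
synchronization `(Δ_i, δ_i) : h_{i0} ⇝ h_i`, each `δ_i` being compatible with `Δ_i` and
monotone (increasing or decreasing) for the anteriority preorders, with `Δ_{i0}` and
`δ_{i0}` the identities. -/
structure InteractionCtx (F : DynFamily) where
  R : Set (∀ i, (F.H i → Option (F.X i)) × F.L i)
  i0 : F.I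
  Δ : ∀ i, F.D i0 → F.D i
  δ : ∀ i, F.H i0 → F.H i
  δMem : ∀ i (S : F.D i0), ∀ t ∈ F.hS i0 S, δ i t ∈ F.hS i (Δ i S)
  δMono : ∀ i, (∀ s t, F.ante i0 s t → F.ante i (δ i s) (δ i t)) ∨
               (∀ s t, F.ante i0 s t → F.ante i (δ i t) (δ i s))
  ΔId : ∀ S : F.D i0, Δ i0 S = S
  δId : ∀ t, δ i0 t = t

/-- The coherent part `Ř` of the interaction request: those families of the request in
which each `σ_i` is an outgoing realization of `A_i` for the parameter value `λ_i`. -/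
def InteractionCtx.Rcheck {F : DynFamily} (C : InteractionCtx F) :
    Set (∀ i, (F.H i → Option (F.X i)) × F.L i) :=
  {q | q ∈ C.R ∧ ∀ i, F.IsRealization i (q i).2 (q i).1}

/-- The parametric set `M = Im(br(Ř))` of the global dynamic. -/
def InteractionCtx.Mset {F : DynFamily} (C : InteractionCtx F) : Set (∀ i, F.L i) :=
  {μ | ∃ σf : ∀ i, F.H i → Option (F.X i), (fun i => (σf i, μ i)) ∈ C.Rcheck}

/-- The set `S^β` of states of type `S` of the global dynamic `β`. -/
def InteractionCtx.Sbeta {F : DynFamily} (C : InteractionCtx F) (S : F.D C.i0) :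
    Set (∀ i, F.X i) :=
  {a | (∀ i, a i ∈ F.stS i (C.Δ i S)) ∧ ∀ i, F.rho i (a i) = C.δ i (F.rho C.i0 (a C.i0))}

/-- The transition `d^β_μ` of the global dynamic `β`. -/
def InteractionCtx.dbeta {F : DynFamily} (C : InteractionCtx F) {S T : F.D C.i0}
    (d : S ⟶ T) (μ : ∀ i, F.L i) (a : ∀ i, F.X i) : Set (∀ i, F.X i) :=
  {b | b ∈ C.Sbeta T ∧ F.rho C.i0 (b C.i0) = F.hmap C.i0 d (F.rho C.i0 (a C.i0)) ∧
      ∃ σf : ∀ i, F.H i → Option (F.X i), (fun i => (σf i, μ i)) ∈ C.Rcheck ∧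
        ∀ i, F.Pass i (σf i) (a i) ∧ F.Pass i (σf i) (b i)}

/-- Lax-functorial stability theorem, disjunctivity part:
since `α_{i0}` is disjunctive, for any two distinct objects `S ≠ T` of `E = D_{i0}`,
the sets `S^β` and `T^β` (subsets of `Π_{i ∈ I} st(α_i)`) are disjoint. -/
theorem stmt_1 (F : DynFamily) (C : InteractionCtx F) (hadm : C.Rcheck.Nonempty) :
    ∀ S T : F.D C.i0, S ≠ T → C.Sbeta S ∩ C.Sbeta T = ∅ := by
  intro S T hST
  ext a
  simp only [Set.mem_inter_iff, Set.mem_empty_iff_false, iff_false]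
  rintro ⟨⟨hS, -⟩, ⟨hT, -⟩⟩
  have h1 := hS C.i0
  have h2 := hT C.i0
  rw [C.ΔId] at h1 h2
  have := F.stDisj C.i0 hST
  exact absurd (Set.mem_inter h1 h2) (by rw [this]; exact Set.notMem_empty _)
end

section
/- (Lax-functorial stability theorem, lax identity part.) In the situation described in the context, for every object S of E = D_{i0}, every μ ∈ M and every a ∈ S^β, every element of (Id_S)^β_μ(a) is equal to a; that is, (Id_S)^β_μ ⊆ Id_{S^β}. -/
open CategoryTheory

/-- Lax-functorial stability theorem, lax identity part:
for every object `S` of `E = D_{i0}`, every `μ ∈ M` and every `a ∈ S^β`,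
every element of `(Id_S)^β_μ(a)` is equal to `a`; that is, `(Id_S)^β_μ ⊆ Id_{S^β}`. -/
theorem stmt_2 (F : DynFamily) (C : InteractionCtx F) (hadm : C.Rcheck.Nonempty) :
    ∀ (S : F.D C.i0) (μ : ∀ i, F.L i), μ ∈ C.Mset →
      ∀ a ∈ C.Sbeta S, ∀ b ∈ C.dbeta (𝟙 S) μ a, b = a := by
  intro S μ _ a ha b hb
  obtain ⟨hbS, hrho, σf, -, hpass⟩ := hb
  have hai0 : a C.i0 ∈ F.stS C.i0 S := by
    have := ha.1 C.i0; rwa [C.ΔId] at this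
  have hrhoa : F.rho C.i0 (a C.i0) ∈ F.hS C.i0 S := F.rhoMem _ _ _ hai0
  have hrho0 : F.rho C.i0 (b C.i0) = F.rho C.i0 (a C.i0) := by
    rw [hrho, F.hId _ _ _ hrhoa]
  funext i
  have hr : F.rho i (b i) = F.rho i (a i) := by
    rw [hbS.2 i, ha.2 i, hrho0]
  have h1 := (hpass i).1
  have h2 := (hpass i).2
  unfold DynFamily.Pass at h1 h2
  rw [hr, h1] at h2
  exact (Option.some.injEq _ _).mp h2.symm
end

section
/- (Lax-functorial stability theorem, lax composition part.) In the situation described in the context, for all composable arrows d : S → T and e : T → U of E = D_{i0} and every μ ∈ M, one has (e ∘ d)^β_μ ⊆ e^β_μ ⊙ d^β_μ; explicitly, for every a ∈ S^β and every c ∈ (e ∘ d)^β_μ(a) there exists b ∈ d^β_μ(a) with c ∈ e^β_μ(b). Together with disjunctivity and the lax identity condition, this shows that β is an M-dynamic on E. -/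
open CategoryTheory

/-- Lax-functorial stability theorem, lax composition part:
for all composable arrows `d : S ⟶ T` and `e : T ⟶ U` of `E = D_{i0}` and every `μ ∈ M`,
`(e ∘ d)^β_μ ⊆ e^β_μ ⊙ d^β_μ` : for every `a ∈ S^β` and every `c ∈ (e ∘ d)^β_μ(a)` there
exists `b ∈ d^β_μ(a)` with `c ∈ e^β_μ(b)`.  (Together with disjunctivity and the lax
identity condition, this shows that `β` is an `M`-dynamic on `E`.) -/
theorem stmt_3 (F : DynFamily) (C : InteractionCtx F) (hadm : C.Rcheck.Nonempty) :
    ∀ ⦃S T U : F.D C.i0⦄ (d : S ⟶ T) (e : T ⟶ U) (μ : ∀ i, F.L i), μ ∈ C.Mset →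
      ∀ a ∈ C.Sbeta S, ∀ c ∈ C.dbeta (d ≫ e) μ a,
        ∃ b ∈ C.dbeta d μ a, c ∈ C.dbeta e μ b := by

  intro S T U d e μ hμ a ha c hc
  obtain ⟨hcS, hcr, σf, hσR, hpass⟩ := hc
  set t := F.rho C.i0 (a C.i0) with ht
  have hai0 : a C.i0 ∈ F.stS C.i0 S := by have h := ha.1 C.i0; rwa [C.ΔId] at h
  have htS : t ∈ F.hS C.i0 S := F.rhoMem C.i0 S _ hai0
  have htT : F.hmap C.i0 d t ∈ F.hS C.i0 T := F.hMem C.i0 d t htS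
  have hreal : ∀ i, F.IsRealization i (μ i) (σf i) := hσR.2
  have hante1 : F.ante C.i0 t (F.hmap C.i0 d t) := ⟨S, T, d, htS, rfl⟩
  have hante2 : F.ante C.i0 (F.hmap C.i0 d t) (F.hmap C.i0 (d ≫ e) t) :=
    ⟨T, U, e, htT, (F.hComp C.i0 d e t htS).symm⟩
  have key : ∀ i (s t' : F.H i) (x : F.X i), F.ante i s t' → σf i t' = some x →
      ∃ y, σf i s = some y := by
    intro i s t' x hst hx
    obtain ⟨S', T', f, hsS', hf⟩ := hst
    obtain ⟨y, hy, -⟩ := (hreal i).2.2.2 f s hsS' x (by rwa [hf])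
    exact ⟨y, hy⟩
  have hdef : ∀ i, ∃ y, σf i (C.δ i (F.hmap C.i0 d t)) = some y := by
    intro i
    rcases C.δMono i with hmono | hmono
    · have hrc : F.rho i (c i) = C.δ i (F.hmap C.i0 (d ≫ e) t) := by
        rw [hcS.2 i, hcr]
      refine key i _ (F.rho i (c i)) (c i) ?_ (hpass i).2
      rw [hrc]; exact hmono _ _ hante2
    · have hra : F.rho i (a i) = C.δ i t := ha.2 i
      refine key i _ (F.rho i (a i)) (a i) ?_ (hpass i).1
      rw [hra]; exact hmono _ _ hante1
  choose b hb using hdef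
  have hrb : ∀ i, F.rho i (b i) = C.δ i (F.hmap C.i0 d t) := fun i =>
    (hreal i).2.1 _ _ (hb i)
  have hbmem : ∀ i, b i ∈ F.stS i (C.Δ i T) := fun i =>
    (hreal i).2.2.1 (C.Δ i T) _ (C.δMem i T _ htT) _ (hb i)
  have hrb0 : F.rho C.i0 (b C.i0) = F.hmap C.i0 d t := by rw [hrb, C.δId]
  have hbS : b ∈ C.Sbeta T := ⟨hbmem, fun i => by rw [hrb i, hrb0]⟩
  have hpassb : ∀ i, F.Pass i (σf i) (b i) := fun i => by
    unfold DynFamily.Pass; rw [hrb i]; exact hb i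
  refine ⟨b, ⟨hbS, hrb0, σf, hσR, fun i => ⟨(hpass i).1, hpassb i⟩⟩,
    ⟨hcS, ?_, σf, hσR, fun i => ⟨hpassb i, (hpass i).2⟩⟩⟩
  rw [hcr, hrb0, F.hComp C.i0 d e t htS]
end

section
/- Let I be an index set, Z = (Z_i)_{i∈I} and L = (L_i)_{i∈I} families of sets, and R a multiple binary relation with graph |R| ⊆ Π_{i∈I}(Z_i × L_i), regarded as an I-multiple relation in the product context (Z_i × L_i)_{i∈I}. Let R̲ be the projection of R onto the context Z, i.e. the I-multiple relation with graph {(σ_i)_{i∈I} ∈ Π_{i∈I} Z_i : ∃(λ_i)_{i∈I} ∈ Π_{i∈I} L_i, ((σ_i, λ_i))_{i∈I} ∈ |R|}. Then every subset K ⊆ I that is non-splittable for R̲ is non-splittable for R; that is, the connectivity structure of R̲ is contained in the connectivity structure of R: 𝒦_{R̲} ⊆ 𝒦_R. -/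
/-- The restriction `R|K` of an `I`-multiple relation with graph `G` in the context `E`
to a subset `K ⊆ I` : the image of `G` under restriction of families to `K`. -/
def mres {I : Type*} {E : I → Type*} (G : Set (∀ i, E i)) (K : Set I) :
    Set (∀ k : K, E k) :=
  (fun (x : ∀ i, E i) (k : K) => x k.1) '' G

/-- The gluing `R1 ⊗ R2` of a `K1`-relation and a `K2`-relation: the `(K1 ∪ K2)`-relation
whose graph consists of the families whose restrictions to `K1` and to `K2` belong to the
respective graphs. -/
def mglue {I : Type*} {E : I → Type*} {K1 K2 : Set I}
    (G1 : Set (∀ k : K1, E k)) (G2 : Set (∀ k : K2, E k)) :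
    Set (∀ k : ↥(K1 ∪ K2), E k) :=
  {x | (fun k : K1 => x ⟨k.1, Set.mem_union_left K2 k.2⟩) ∈ G1 ∧
       (fun k : K2 => x ⟨k.1, Set.mem_union_right K1 k.2⟩) ∈ G2}

/-- `K` is non-splittable for the `I`-multiple relation with graph `G` : there is no
partition `K = K1 ⊔ K2` into two nonempty disjoint subsets with `R|K = R|K1 ⊗ R|K2`.
The connectivity structure `𝒦_R` is the set of non-splittable subsets of the arity. -/
def NonSplittable {I : Type*} {E : I → Type*} (G : Set (∀ i, E i)) (K : Set I) : Prop :=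
  ¬ ∃ K1 K2 : Set I, K1 ∪ K2 = K ∧ K1 ∩ K2 = ∅ ∧ K1.Nonempty ∧ K2.Nonempty ∧
      mres G (K1 ∪ K2) = mglue (mres G K1) (mres G K2)

/-- The projection `R̲` of a multiple binary relation `R` (with incoming context `Z` and
outgoing context `L`) onto the context `Z`. -/
def mbrProj {I : Type*} {Z L : I → Type*} (R : Set (∀ i, Z i × L i)) :
    Set (∀ i, Z i) :=
  {σ | ∃ lam : ∀ i, L i, (fun i => (σ i, lam i)) ∈ R}

/-- every subset `K ⊆ I` that is non-splittable for the projection `R̲` of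
a multiple binary relation `R` is non-splittable for `R` itself; that is,
`𝒦_{R̲} ⊆ 𝒦_R`. -/
theorem stmt_4 {I : Type*} {Z L : I → Type*}
    (R : Set (∀ i, Z i × L i)) (K : Set I)
    (h : NonSplittable (mbrProj R) K) :
    NonSplittable R K := by
  rintro ⟨K1, K2, hu, hd, hn1, hn2, heq⟩
  apply h
  refine ⟨K1, K2, hu, hd, hn1, hn2, ?_⟩
  ext x
  constructor
  · rintro ⟨σ, hσ, rfl⟩
    exact ⟨⟨σ, hσ, rfl⟩, ⟨σ, hσ, rfl⟩⟩
  · rintro ⟨⟨σ1, ⟨lam1, hp1⟩, h1⟩, ⟨σ2, ⟨lam2, hp2⟩, h2⟩⟩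
    classical
    set p : ∀ i, Z i × L i := fun i =>
      if i ∈ K1 then (σ1 i, lam1 i) else (σ2 i, lam2 i) with hp
    have hmem : (fun k : ↥(K1 ∪ K2) => p k.1) ∈ mglue (E := fun i => Z i × L i) (mres R K1) (mres R K2) := by
      constructor
      · refine ⟨fun i => (σ1 i, lam1 i), hp1, ?_⟩
        funext k
        simp [hp, k.2]
      · refine ⟨fun i => (σ2 i, lam2 i), hp2, ?_⟩
        funext k
        have hk1 : k.1 ∉ K1 := fun hk =>
          Set.eq_empty_iff_forall_notMem.mp hd k.1 ⟨hk, k.2⟩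
        simp [hp, hk1]
    rw [← heq] at hmem
    obtain ⟨q, hq, hq'⟩ := hmem
    refine ⟨fun i => (q i).1, ⟨fun i => (q i).2, hq⟩, ?_⟩
    funext k
    have hqk : q k.1 = p k.1 := congrFun hq' k
    rcases k.2 with hk | hk
    · have hx : σ1 k.1 = x k := congrFun h1 ⟨k.1, hk⟩
      show (q k.1).1 = x k
      rw [hqk]
      calc (p k.1).1 = σ1 k.1 := by simp [hp, hk]
        _ = x k := hx
    · have hk1 : k.1 ∉ K1 := fun h' =>
        Set.eq_empty_iff_forall_notMem.mp hd k.1 ⟨h', hk⟩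
      have hx : σ2 k.1 = x k := congrFun h2 ⟨k.1, hk⟩
      show (q k.1).1 = x k
      rw [hqk]
      calc (p k.1).1 = σ2 k.1 := by simp [hp, hk1]
        _ = x k := hx
end

section
/- Consider the open dynamic 𝕐 on the monoid (ℝ≥0, +) (viewed as a one-object category) with set of states st(𝕐) = ℝ≥0 × ℝ, clock the existential clock ξ with instants st(ξ) = ℝ≥0 and d^ξ(t) = t + d for all t, d ∈ ℝ≥0, datation τ(t, a) = t, and transitions d^α(t, a) = {t + d} × [a − d, a + d] for every duration d ∈ ℝ≥0. A partial function σ : ℝ≥0 ⇸ ℝ≥0 × ℝ with domain D = Def_σ is a realization of 𝕐 (i.e. satisfies: (1) the first component of σ(t) equals t for every t ∈ D, and (3) for all t, d ∈ ℝ≥0, if t + d ∈ D then t ∈ D and σ(t + d) ∈ {t + d} × [snd(σ(t)) − d, snd(σ(t)) + d]) if and only if D is a downward-closed subset of ℝ≥0 — hence of the form ∅, [0, a], [0, a) with a ∈ ℝ≥0, or [0, ∞) — and the function f : D → ℝ, f(t) = snd(σ(t)), is 1-Lipschitz on D (|f(s) − f(t)| ≤ |s − t| for all s, t ∈ D) with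 σ(t) = (t, f(t)) for all t ∈ D. Thus the realizations of 𝕐 correspond exactly to the 1-Lipschitz real functions defined on initial segments of ℝ≥0. -/
open scoped NNReal

/-- realizations of the open dynamic `𝕐` on the monoid `(ℝ≥0, +)`.
A partial function `σ : ℝ≥0 ⇸ ℝ≥0 × ℝ`, encoded by its domain `Dom` and a total function
`g` (only the values of `g` on `Dom` matter), is a realization of `𝕐` — i.e. satisfies
(1) the first component of `σ(t)` equals `t` for every `t ∈ Dom`, and
(3) for all `t, d ∈ ℝ≥0`, if `t + d ∈ Dom` then `t ∈ Dom` and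
    `σ(t + d) ∈ {t + d} × [snd (σ t) − d, snd (σ t) + d]` —
if and only if `Dom` is a downward-closed subset of `ℝ≥0` (hence of the form `∅`,
`[0, a]`, `[0, a)` or `[0, ∞)`) and the second-component function is 1-Lipschitz on `Dom`,
with `σ(t) = (t, snd (σ t))` on `Dom`.  Thus the realizations of `𝕐` correspond exactly
to the 1-Lipschitz real functions defined on initial segments of `ℝ≥0`. -/
theorem stmt_10 (Dom : Set ℝ≥0) (g : ℝ≥0 → ℝ≥0 × ℝ) :
    ((∀ t ∈ Dom, (g t).1 = t) ∧
      (∀ t d : ℝ≥0, t + d ∈ Dom → t ∈ Dom ∧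
        g (t + d) ∈ ({t + d} : Set ℝ≥0) ×ˢ
          Set.Icc ((g t).2 - (d : ℝ)) ((g t).2 + (d : ℝ))))
    ↔
    ((∀ s t : ℝ≥0, s ≤ t → t ∈ Dom → s ∈ Dom) ∧
      (∀ s ∈ Dom, ∀ t ∈ Dom, |(g s).2 - (g t).2| ≤ |(s : ℝ) - (t : ℝ)|) ∧
      (∀ t ∈ Dom, g t = (t, (g t).2))) := by
  constructor
  · rintro ⟨h1, h3⟩
    have key : ∀ s t : ℝ≥0, s ≤ t → t ∈ Dom →
        s ∈ Dom ∧ |(g t).2 - (g s).2| ≤ (t : ℝ) - s := by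
      intro s t hst ht
      obtain ⟨d, rfl⟩ := le_iff_exists_add.mp hst
      obtain ⟨hs, hmem⟩ := h3 s d ht
      simp only [Set.mem_prod, Set.mem_Icc] at hmem
      refine ⟨hs, ?_⟩
      rw [abs_sub_le_iff]
      push_cast
      constructor <;> linarith [hmem.2.1, hmem.2.2]
    refine ⟨fun s t hst ht => (key s t hst ht).1, ?_, ?_⟩
    · intro s hs t ht
      rcases le_total s t with h | h
      · rw [abs_sub_comm, abs_sub_comm (s : ℝ)]
        have := (key s t h ht).2
        rw [abs_of_nonneg (by linarith [NNReal.coe_le_coe.mpr h] : (0:ℝ) ≤ (t:ℝ) - s)]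
        exact this
      · have := (key t s h hs).2
        rw [abs_of_nonneg (by linarith [NNReal.coe_le_coe.mpr h] : (0:ℝ) ≤ (s:ℝ) - t)]
        exact this
    · intro t ht
      exact Prod.ext (h1 t ht) rfl
  · rintro ⟨hdc, hlip, heq⟩
    constructor
    · intro t ht; rw [heq t ht]
    · intro t d htd
      have ht : t ∈ Dom := hdc t (t + d) (le_add_right le_rfl) htd
      refine ⟨ht, ?_⟩
      simp only [Set.mem_prod, Set.mem_Icc, Set.mem_singleton_iff]
      have h1 : (g (t + d)).1 = t + d := by rw [heq _ htd]
      have := hlip (t + d) htd t ht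
      rw [abs_sub_le_iff] at this
      have hd : |((t + d : ℝ≥0) : ℝ) - (t : ℝ)| = d := by
        push_cast; rw [add_sub_cancel_left, abs_of_nonneg d.coe_nonneg]
      rw [hd] at this
      exact ⟨h1, by linarith [this.2], by linarith [this.1]⟩
end

section
/- Let Z be the set of partial functions σ : {t0, t1} ⇸ {0,1} whose domain is ∅, {t0}, or {t0, t1} (this is the set of outgoing realizations of the one-step deterministic cell Υ), and let L = {0,1}^{{0,1}} be the set of all functions {0,1} → {0,1}. Call a pair (σ, λ) ∈ Z × L coherent if, whenever σ has domain {t0, t1}, σ(t1) = λ(σ(t0)). Let I = {1, 2, 3} and let Q be the multiple binary relation in the context given by Z_i = Z and L_i = L for all i, with graph |Q| = {((σ_i, λ_i))_{i∈I} ∈ (Z × L)^3 : λ_i(0) = 1 for at least one i ∈ I}. Let Ř be the coherent part of Q (those elements of |Q| in which each of the three pairs (σ_i, λ_i) is coherent), and let Ř̲ be the projection of Ř onto Z^3. Then the connectivity structure 𝒦_{Ř̲} and the connectivity structure 𝒦_{Ř} are both equal to the integral borromean structure on I: a subset K ⊆ {1,2,3} is non-splittable if and only if K is not one of the three two-element subsets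 {1,2}, {1,3}, {2,3} (i.e. the connected subsets are ∅, the singletons, and {1,2,3}). -/
/-- Outgoing realizations of the one-step deterministic cell `Υ` : partial functions
`σ : {t0, t1} ⇸ {0, 1}` (instants encoded by `Bool`, `false = t0`, `true = t1`; values
encoded by `Bool`, `false = 0`, `true = 1`) whose domain is `∅`, `{t0}` or `{t0, t1}`,
i.e. such that if `σ` is defined at `t1` it is defined at `t0`. -/
def ZUpsilon : Type :=
  {σ : Bool → Option Bool // σ true ≠ none → σ false ≠ none}

/-- Parameter values of `Υ` : the functions `{0,1} → {0,1}`. -/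
def LUpsilon : Type := Bool → Bool

/-- The pair `(σ, λ)` is coherent: whenever `σ` has domain `{t0, t1}`,
`σ(t1) = λ(σ(t0))`. -/
def Coherent (p : ZUpsilon × LUpsilon) : Prop :=
  ∀ a b : Bool, p.1.1 false = some a → p.1.1 true = some b → b = p.2 a

/-- The borromean interaction request `Q` : families `((σ_i, λ_i))_{i ∈ I}`,
`I = {1, 2, 3}`, with `λ_i(0) = 1` for at least one `i`. -/
def borromeanQ : Set (Fin 3 → ZUpsilon × LUpsilon) :=
  {q | ∃ i, (q i).2 false = true}

/-- The coherent part `Ř` of the borromean request: elements of `|Q|` all of whose three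
pairs are coherent. -/
def borromeanRcheck : Set (Fin 3 → ZUpsilon × LUpsilon) :=
  {q | q ∈ borromeanQ ∧ ∀ i, Coherent (q i)}

/-- The projection `Ř̲` of `Ř` onto `Z^3`. -/
def borromeanProj : Set (Fin 3 → ZUpsilon) :=
  {σ | ∃ lam : Fin 3 → LUpsilon, (fun i => (σ i, lam i)) ∈ borromeanRcheck}

/-! ### Auxiliary material -/

/-- The everywhere-undefined outgoing realization. -/
def sigUndef : ZUpsilon := ⟨fun _ => none, fun h => h⟩

/-- The realization `σ(t0) = 0, σ(t1) = 0`, the only one forcing `λ(0) = 0`. -/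
def sigBad : ZUpsilon := ⟨fun _ => some false, fun _ => Option.some_ne_none false⟩

/-- A canonical parameter coherent with a given realization. -/
def cohLam (σ : ZUpsilon) : LUpsilon :=
  fun a => if σ.1 false = some a then (σ.1 true).getD true else true

lemma coherent_cohLam (σ : ZUpsilon) : Coherent (σ, cohLam σ) := by
  intro a b h1 h2
  replace h1 : σ.1 false = some a := h1
  replace h2 : σ.1 true = some b := h2
  show b = cohLam σ a
  simp [cohLam, h1, h2]

lemma cohLam_undef : cohLam sigUndef false = true := by
  simp [cohLam, sigUndef]

lemma coherent_top : Coherent (sigUndef, fun _ => true) := by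
  intro a b h1 _
  replace h1 : sigUndef.1 false = some a := h1
  simp [sigUndef] at h1

lemma coherent_bot : Coherent (sigUndef, fun _ => false) := by
  intro a b h1 _
  replace h1 : sigUndef.1 false = some a := h1
  simp [sigUndef] at h1

/-- The restriction of the projection to a proper subset of `{0,1,2}` is everything. -/
lemma mres_proj_proper {K : Set (Fin 3)} (m : Fin 3) (hm : m ∉ K) :
    mres borromeanProj K = Set.univ := by
  classical
  ext x
  simp only [Set.mem_univ, iff_true]
  refine ⟨fun i => if h : i ∈ K then x ⟨i, h⟩ else sigUndef, ?_, ?_⟩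
  · refine ⟨fun i => cohLam (if h : i ∈ K then x ⟨i, h⟩ else sigUndef), ⟨m, ?_⟩,
      fun i => coherent_cohLam _⟩
    show cohLam (if h : m ∈ K then x ⟨m, h⟩ else sigUndef) false = true
    rw [dif_neg hm]
    exact cohLam_undef
  · funext k
    simp [k.2]

/-- The restriction of `Ř` to a proper subset of `{0,1,2}` is the set of coherent
families. -/
lemma mres_rcheck_proper {K : Set (Fin 3)} (m : Fin 3) (hm : m ∉ K) :
    mres borromeanRcheck K = {x | ∀ k : K, Coherent (x k)} := by
  classical
  ext x
  constructor
  · rintro ⟨q, ⟨_, hcoh⟩, rfl⟩ k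
    exact hcoh k.1
  · intro hx
    refine ⟨fun i => if h : i ∈ K then x ⟨i, h⟩ else (sigUndef, fun _ => true),
      ⟨⟨m, ?_⟩, ?_⟩, ?_⟩
    · show ((if h : m ∈ K then x ⟨m, h⟩ else (sigUndef, fun _ => true)).2) false = true
      rw [dif_neg hm]
    · intro i
      by_cases h : i ∈ K
      · simpa only [dif_pos h] using hx ⟨i, h⟩
      · simpa only [dif_neg h] using coherent_top
    · funext k
      simp [k.2]

lemma mglue_univ {I : Type*} {E : I → Type*} (K1 K2 : Set I) :
    mglue (Set.univ : Set (∀ k : K1, E k)) (Set.univ : Set (∀ k : K2, E k)) = Set.univ := by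
  ext x; simp [mglue]

lemma mglue_coh (K1 K2 : Set (Fin 3)) :
    mglue (E := fun _ => ZUpsilon × LUpsilon)
          {x : ∀ _ : K1, ZUpsilon × LUpsilon | ∀ k, Coherent (x k)}
          {x : ∀ _ : K2, ZUpsilon × LUpsilon | ∀ k, Coherent (x k)}
      = {x : ∀ _ : ↥(K1 ∪ K2), ZUpsilon × LUpsilon | ∀ k, Coherent (x k)} := by
  ext x
  simp only [mglue, Set.mem_setOf_eq]
  constructor
  · rintro ⟨h1, h2⟩ ⟨k, hk⟩
    rcases hk with hk | hk
    · exact h1 ⟨k, hk⟩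
    · exact h2 ⟨k, hk⟩
  · exact fun h => ⟨fun k => h _, fun k => h _⟩

lemma ns_subsingleton {I : Type*} {E : I → Type*} (G : Set (∀ i, E i)) {K : Set I}
    (h : K.Subsingleton) : NonSplittable G K := by
  rintro ⟨K1, K2, hu, hd, ⟨a, ha⟩, ⟨b, hb⟩, -⟩
  have haK : a ∈ K := hu ▸ Set.mem_union_left _ ha
  have hbK : b ∈ K := hu ▸ Set.mem_union_right _ hb
  have hab : a = b := h haK hbK
  subst hab
  have : a ∈ K1 ∩ K2 := ⟨ha, hb⟩
  rw [hd] at this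
  exact this

lemma not_ns_proj_pair (i j m : Fin 3) (hij : i ≠ j) (hmi : m ≠ i) (hmj : m ≠ j) :
    ¬ NonSplittable borromeanProj ({i, j} : Set (Fin 3)) := by
  intro h
  apply h
  refine ⟨{i}, {j}, Set.singleton_union, ?_, ⟨i, rfl⟩, ⟨j, rfl⟩, ?_⟩
  · exact Set.singleton_inter_eq_empty.mpr (by simp [hij])
  · rw [mres_proj_proper m (by simp [hmi, hmj]), mres_proj_proper m (by simp [hmi]),
      mres_proj_proper m (by simp [hmj]), mglue_univ]

lemma not_ns_rcheck_pair (i j m : Fin 3) (hij : i ≠ j) (hmi : m ≠ i) (hmj : m ≠ j) :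
    ¬ NonSplittable borromeanRcheck ({i, j} : Set (Fin 3)) := by
  intro h
  apply h
  refine ⟨{i}, {j}, Set.singleton_union, ?_, ⟨i, rfl⟩, ⟨j, rfl⟩, ?_⟩
  · exact Set.singleton_inter_eq_empty.mpr (by simp [hij])
  · rw [mres_rcheck_proper m (by simp [hmi, hmj]), mres_rcheck_proper m (by simp [hmi]),
      mres_rcheck_proper m (by simp [hmj]), mglue_coh]

lemma ns_proj_univ : NonSplittable borromeanProj (Set.univ : Set (Fin 3)) := by
  rintro ⟨K1, K2, hu, hd, ⟨a, ha⟩, ⟨b, hb⟩, heq⟩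
  have hb1 : b ∉ K1 := fun h => by
    have : b ∈ K1 ∩ K2 := ⟨h, hb⟩; rw [hd] at this; exact this
  have ha2 : a ∉ K2 := fun h => by
    have : a ∈ K1 ∩ K2 := ⟨ha, h⟩; rw [hd] at this; exact this
  rw [mres_proj_proper b hb1, mres_proj_proper a ha2, mglue_univ] at heq
  have hmem : (fun _ : ↥(K1 ∪ K2) => sigBad) ∈ mres borromeanProj (K1 ∪ K2) := by
    rw [heq]; trivial
  obtain ⟨x, ⟨lam, ⟨i, hi⟩, hcoh⟩, hfx⟩ := hmem
  have hx : x i = sigBad := congrFun hfx ⟨i, hu ▸ Set.mem_univ i⟩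
  have hi' : lam i false = true := hi
  have h1 : (x i).1 false = some false := by rw [hx]; rfl
  have h2 : (x i).1 true = some false := by rw [hx]; rfl
  have h3 : false = lam i false := hcoh i false false h1 h2
  rw [hi'] at h3
  exact Bool.noConfusion h3

lemma ns_rcheck_univ : NonSplittable borromeanRcheck (Set.univ : Set (Fin 3)) := by
  rintro ⟨K1, K2, hu, hd, ⟨a, ha⟩, ⟨b, hb⟩, heq⟩
  have hb1 : b ∉ K1 := fun h => by
    have : b ∈ K1 ∩ K2 := ⟨h, hb⟩; rw [hd] at this; exact this
  have ha2 : a ∉ K2 := fun h => by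
    have : a ∈ K1 ∩ K2 := ⟨ha, h⟩; rw [hd] at this; exact this
  rw [mres_rcheck_proper b hb1, mres_rcheck_proper a ha2, mglue_coh] at heq
  have hmem : (fun _ : ↥(K1 ∪ K2) => ((sigUndef, fun _ => false) : ZUpsilon × LUpsilon))
      ∈ mres borromeanRcheck (K1 ∪ K2) := by
    rw [heq]
    exact fun k => coherent_bot
  obtain ⟨q, ⟨⟨i, hi⟩, -⟩, hfq⟩ := hmem
  have hq : q i = (sigUndef, fun _ => false) := congrFun hfq ⟨i, hu ▸ Set.mem_univ i⟩
  rw [hq] at hi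
  exact Bool.noConfusion hi

lemma ne_of_wit {α : Type*} {A B : Set α} (x : α) (hA : x ∈ A) (hB : x ∉ B) : A ≠ B :=
  fun h => hB (h ▸ hA)

theorem stmt_11 (K : Set (Fin 3)) :
    (NonSplittable borromeanProj K ↔
      ¬(K = {0, 1} ∨ K = {0, 2} ∨ K = {1, 2})) ∧
    (NonSplittable borromeanRcheck K ↔
      ¬(K = {0, 1} ∨ K = {0, 2} ∨ K = {1, 2})) := by
  by_cases h0 : (0 : Fin 3) ∈ K <;> by_cases h1 : (1 : Fin 3) ∈ K <;>
    by_cases h2 : (2 : Fin 3) ∈ K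
  · -- K = univ
    have hK : K = Set.univ := by ext i; fin_cases i <;> simp [h0, h1, h2]
    subst hK
    have hne : ¬((Set.univ : Set (Fin 3)) = {0, 1} ∨ (Set.univ : Set (Fin 3)) = {0, 2} ∨
        (Set.univ : Set (Fin 3)) = {1, 2}) := by
      rintro (h | h | h)
      · exact ne_of_wit 2 (Set.mem_univ _) (by simp) h
      · exact ne_of_wit 1 (Set.mem_univ _) (by simp) h
      · exact ne_of_wit 0 (Set.mem_univ _) (by simp) h
    exact ⟨⟨fun _ => hne, fun _ => ns_proj_univ⟩, ⟨fun _ => hne, fun _ => ns_rcheck_univ⟩⟩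
  · -- K = {0,1}
    have hK : K = {0, 1} := by ext i; fin_cases i <;> simp [h0, h1, h2]
    subst hK
    exact ⟨⟨fun hns => absurd hns (not_ns_proj_pair 0 1 2 (by decide) (by decide) (by decide)),
        fun hnd => absurd (Or.inl rfl) hnd⟩,
      ⟨fun hns => absurd hns (not_ns_rcheck_pair 0 1 2 (by decide) (by decide) (by decide)),
        fun hnd => absurd (Or.inl rfl) hnd⟩⟩
  · -- K = {0,2}
    have hK : K = {0, 2} := by ext i; fin_cases i <;> simp [h0, h1, h2]
    subst hK
    exact ⟨⟨fun hns => absurd hns (not_ns_proj_pair 0 2 1 (by decide) (by decide) (by decide)),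
        fun hnd => absurd (Or.inr (Or.inl rfl)) hnd⟩,
      ⟨fun hns => absurd hns (not_ns_rcheck_pair 0 2 1 (by decide) (by decide) (by decide)),
        fun hnd => absurd (Or.inr (Or.inl rfl)) hnd⟩⟩
  · -- K = {0}
    have hK : K = {0} := by ext i; fin_cases i <;> simp [h0, h1, h2]
    subst hK
    have hne : ¬(({0} : Set (Fin 3)) = {0, 1} ∨ ({0} : Set (Fin 3)) = {0, 2} ∨
        ({0} : Set (Fin 3)) = {1, 2}) := by
      rintro (h | h | h)
      · have := Set.ext_iff.mp h 1; simp at this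
      · have := Set.ext_iff.mp h 2; simp at this
      · have := Set.ext_iff.mp h 1; simp at this
    have hss : ({0} : Set (Fin 3)).Subsingleton := Set.subsingleton_singleton
    exact ⟨⟨fun _ => hne, fun _ => ns_subsingleton _ hss⟩,
      ⟨fun _ => hne, fun _ => ns_subsingleton _ hss⟩⟩
  · -- K = {1,2}
    have hK : K = {1, 2} := by ext i; fin_cases i <;> simp [h0, h1, h2]
    subst hK
    exact ⟨⟨fun hns => absurd hns (not_ns_proj_pair 1 2 0 (by decide) (by decide) (by decide)),
        fun hnd => absurd (Or.inr (Or.inr rfl)) hnd⟩,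
      ⟨fun hns => absurd hns (not_ns_rcheck_pair 1 2 0 (by decide) (by decide) (by decide)),
        fun hnd => absurd (Or.inr (Or.inr rfl)) hnd⟩⟩
  · -- K = {1}
    have hK : K = {1} := by ext i; fin_cases i <;> simp [h0, h1, h2]
    subst hK
    have hne : ¬(({1} : Set (Fin 3)) = {0, 1} ∨ ({1} : Set (Fin 3)) = {0, 2} ∨
        ({1} : Set (Fin 3)) = {1, 2}) := by
      rintro (h | h | h)
      · have := Set.ext_iff.mp h 0; simp at this
      · have := Set.ext_iff.mp h 0; simp at this
      · have := Set.ext_iff.mp h 2; simp at this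
    have hss : ({1} : Set (Fin 3)).Subsingleton := Set.subsingleton_singleton
    exact ⟨⟨fun _ => hne, fun _ => ns_subsingleton _ hss⟩,
      ⟨fun _ => hne, fun _ => ns_subsingleton _ hss⟩⟩
  · -- K = {2}
    have hK : K = {2} := by ext i; fin_cases i <;> simp [h0, h1, h2]
    subst hK
    have hne : ¬(({2} : Set (Fin 3)) = {0, 1} ∨ ({2} : Set (Fin 3)) = {0, 2} ∨
        ({2} : Set (Fin 3)) = {1, 2}) := by
      rintro (h | h | h)
      · have := Set.ext_iff.mp h 0; simp at this
      · have := Set.ext_iff.mp h 0; simp at this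
      · have := Set.ext_iff.mp h 1; simp at this
    have hss : ({2} : Set (Fin 3)).Subsingleton := Set.subsingleton_singleton
    exact ⟨⟨fun _ => hne, fun _ => ns_subsingleton _ hss⟩,
      ⟨fun _ => hne, fun _ => ns_subsingleton _ hss⟩⟩
  · -- K = ∅
    have hK : K = ∅ := by ext i; fin_cases i <;> simp [h0, h1, h2]
    subst hK
    have hne : ¬((∅ : Set (Fin 3)) = {0, 1} ∨ (∅ : Set (Fin 3)) = {0, 2} ∨
        (∅ : Set (Fin 3)) = {1, 2}) := by
      rintro (h | h | h)
      · have := Set.ext_iff.mp h 0; simp at this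
      · have := Set.ext_iff.mp h 0; simp at this
      · have := Set.ext_iff.mp h 1; simp at this
    exact ⟨⟨fun _ => hne, fun _ => ns_subsingleton _ Set.subsingleton_empty⟩,
      ⟨fun _ => hne, fun _ => ns_subsingleton _ Set.subsingleton_empty⟩⟩
end
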